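/- (Tweedie's formula for the normal model.) Let G be a probability measure on ℝ (the prior on θ), let φ(z) = e^{-z²/2}/√(2π) be the standard normal density, and define the marginal density f(x) = ∫ φ(x − θ) dG(θ). Then f is differentiable at every x ∈ ℝ with f'(x) = ∫ (θ − x) φ(x − θ) dG(θ), and at every x with f(x) > 0 the posterior expectation in the model θ ~ G, X | θ ~ N(θ, 1) satisfies E{θ | X = x} = ∫ θ φ(x − θ) dG(θ) / f(x) = x + l'(x), where l(x) = log f(x). -/

import Mathlib

open MeasureTheory

/-- Tweedie's formula for the normal model: with prior `G` on `ℝ`, standard normal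
density `φ`, and marginal `f(x) = ∫ φ(x − θ) dG(θ)`, the marginal is differentiable with
`f'(x) = ∫ (θ − x) φ(x − θ) dG(θ)`, and at every `x` with `f(x) > 0` the posterior
expectation satisfies `E{θ | X = x} = ∫ θ φ(x − θ) dG(θ) / f(x) = x + l'(x)` with
`l'(x) = f'(x)/f(x)`. -/
theorem stmt17 (G : Measure ℝ) [IsProbabilityMeasure G]
    (φ : ℝ → ℝ) (hφ : ∀ z, φ z = Real.exp (-z ^ 2 / 2) / Real.sqrt (2 * Real.pi))
    (f : ℝ → ℝ) (hf : ∀ x, f x = ∫ θ, φ (x - θ) ∂G) :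
    (∀ x, HasDerivAt f (∫ θ, (θ - x) * φ (x - θ) ∂G) x) ∧
    (∀ x, 0 < f x →
      (∫ θ, θ * φ (x - θ) ∂G) / f x = x + deriv f x / f x) := by
  have hφeq : φ = fun z => Real.exp (-z ^ 2 / 2) / Real.sqrt (2 * Real.pi) := funext hφ
  have hφc : Continuous φ := by
    rw [hφeq]
    exact (Real.continuous_exp.comp (by continuity)).div_const _
  have hφnn : ∀ z, 0 ≤ φ z := fun z => by rw [hφ]; positivity
  have hsqrt : 1 ≤ Real.sqrt (2 * Real.pi) := by
    rw [show (1:ℝ) = Real.sqrt 1 by simp]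
    apply Real.sqrt_le_sqrt; nlinarith [Real.pi_gt_three]
  have hφle : ∀ z, φ z ≤ 1 := by
    intro z; rw [hφ]
    rw [div_le_one (by positivity)]
    calc Real.exp (-z ^ 2 / 2) ≤ 1 := by
          rw [Real.exp_le_one_iff]; nlinarith [sq_nonneg z]
      _ ≤ Real.sqrt (2 * Real.pi) := hsqrt
  have hzφ : ∀ z : ℝ, |z| * φ z ≤ 1 := by
    intro z; rw [hφ]
    have h1 : |z| ≤ Real.exp (z ^ 2 / 2) := by
      nlinarith [sq_abs z, abs_nonneg z, Real.add_one_le_exp (z ^ 2 / 2)]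
    have h2 : |z| * Real.exp (-z ^ 2 / 2) ≤ 1 := by
      rw [show -z ^ 2 / 2 = -(z ^ 2 / 2) by ring, Real.exp_neg]
      rw [← div_eq_mul_inv, div_le_one (Real.exp_pos _)]
      exact h1
    calc |z| * (Real.exp (-z ^ 2 / 2) / Real.sqrt (2 * Real.pi))
        ≤ |z| * Real.exp (-z ^ 2 / 2) := by
          apply mul_le_mul_of_nonneg_left _ (abs_nonneg z)
          apply div_le_self (Real.exp_pos _).le hsqrt
      _ ≤ 1 := h2
  have hbound : ∀ x θ : ℝ, ‖(θ - x) * φ (x - θ)‖ ≤ 1 := by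
    intro x θ
    rw [Real.norm_eq_abs, abs_mul, abs_of_nonneg (hφnn _)]
    have : |θ - x| = |x - θ| := abs_sub_comm θ x
    rw [this]; exact hzφ (x - θ)
  have hderiv : ∀ x θ : ℝ, HasDerivAt (fun x => φ (x - θ)) ((θ - x) * φ (x - θ)) x := by
    intro x θ
    have h1 : HasDerivAt (fun x : ℝ => x - θ) 1 x := (hasDerivAt_id x).sub_const θ
    have h2 : HasDerivAt (fun y : ℝ => -y ^ 2 / 2) (-(x - θ)) (x - θ) := by
      have := ((hasDerivAt_pow 2 (x - θ)).neg.div_const 2)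
      refine this.congr_deriv ?_; push_cast; ring
    have h3 := h2.exp
    have h4 := (h3.comp x h1).div_const (Real.sqrt (2 * Real.pi))
    have : (fun x => φ (x - θ)) = fun x => Real.exp (-(x - θ) ^ 2 / 2) / Real.sqrt (2 * Real.pi) := by
      funext y; rw [hφ]
    rw [this]
    refine h4.congr_deriv ?_
    rw [hφ]; ring
  have hmeas : ∀ x : ℝ, AEStronglyMeasurable (fun θ => φ (x - θ)) G :=
    fun x => (hφc.comp (continuous_const.sub continuous_id)).aestronglyMeasurable
  have hint : ∀ x : ℝ, Integrable (fun θ => φ (x - θ)) G := by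
    intro x
    apply (integrable_const (1 : ℝ)).mono' (hmeas x)
    filter_upwards with θ
    rw [Real.norm_eq_abs, abs_of_nonneg (hφnn _)]
    exact hφle _
  have hint' : ∀ x : ℝ, Integrable (fun θ => (θ - x) * φ (x - θ)) G := by
    intro x
    apply (integrable_const (1 : ℝ)).mono'
    · exact ((continuous_id.sub continuous_const).mul
        (hφc.comp (continuous_const.sub continuous_id))).aestronglyMeasurable
    · filter_upwards with θ using hbound x θ
  have hmain : ∀ x, HasDerivAt f (∫ θ, (θ - x) * φ (x - θ) ∂G) x := by
    intro x₀
    have key := hasDerivAt_integral_of_dominated_loc_of_deriv_le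
      (F := fun x θ => φ (x - θ)) (F' := fun x θ => (θ - x) * φ (x - θ))
      (bound := fun _ => (1 : ℝ)) (μ := G) (x₀ := x₀) (Metric.ball_mem_nhds x₀ one_pos)
      (Filter.Eventually.of_forall fun x => hmeas x) (hint x₀)
      ((hint' x₀).aestronglyMeasurable)
      (Filter.Eventually.of_forall fun θ x _ => hbound x θ)
      (integrable_const 1)
      (Filter.Eventually.of_forall fun θ x _ => hderiv x θ)
    have hfeq : f = fun x => ∫ θ, φ (x - θ) ∂G := funext hf
    rw [hfeq]
    exact key.2
  refine ⟨hmain, fun x hfx => ?_⟩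
  have hd : deriv f x = ∫ θ, (θ - x) * φ (x - θ) ∂G := (hmain x).deriv
  have hsplit : ∫ θ, θ * φ (x - θ) ∂G
      = (∫ θ, (θ - x) * φ (x - θ) ∂G) + x * f x := by
    rw [hf, ← integral_const_mul, ← integral_add (hint' x) ((hint x).const_mul x)]
    congr 1; funext θ; ring
  rw [hd, hsplit]
  field_simp
  ring
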